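/- Let k ≥ 1 be an integer and let E, f, g : (0,∞) → ℝ with E twice continuously differentiable, E″(ν) ≠ 0 for all ν > 0, and f, g continuously differentiable, satisfying for all ν > 0: ν f′(ν) + 2k f(ν) + (ν g′(ν) + (2k−2) g(ν))/(ν² E″(ν)) − f′(ν)(E′(ν) + ν E″(ν))/E″(ν) = 0 and g′(ν) − (E′(ν) + ν E″(ν))(ν g′(ν) + (2k−2) g(ν))/(ν² E″(ν)) + f′(ν)/E″(ν) = 0. Define Ê, f̂, ĝ : (0,∞) → ℝ by Ê(x) = E(√x), f̂(x) = f(√x), ĝ(x) = g(√x). Then 4xÊ″(x) + 2Ê′(x) = E″(√x) ≠ 0 for all x > 0, and Ê, f̂, ĝ satisfy for all x > 0: x f̂′(x) + k f̂(x) + (x ĝ′(x) + (k−1) ĝ(x))/(x(4Ê″(x)x + 2Ê′(x))) − f̂′(x)·x·(4Ê″(x)x + 4Ê′(x))/(4Ê″(x)x + 2Ê′(x)) = 0 and ĝ′(x) − (4Ê″(x)x + 4Ê′(x))(x ĝ′(x) + (k−1) ĝ(x))/(x(4Ê″(x)x + 2Ê′(x))) + f̂′(x)/(4Ê″(x)x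 + 2Ê′(x)) = 0. -/

import Mathlib

lemma comp_sqrt_hasDerivAt {u : ℝ → ℝ} {u' x : ℝ} (hx : 0 < x)
    (hu : HasDerivAt u u' (Real.sqrt x)) :
    HasDerivAt (fun y => u (Real.sqrt y)) (u' * (1 / (2 * Real.sqrt x))) x :=
  hu.comp x (Real.hasDerivAt_sqrt hx.ne')

theorem stmt9 (k : ℕ) (hk : 1 ≤ k) (E f g : ℝ → ℝ)
    (hE : ContDiffOn ℝ 2 E (Set.Ioi 0))
    (hE'' : ∀ ν > (0 : ℝ), deriv (deriv E) ν ≠ 0)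
    (hf : ContDiffOn ℝ 1 f (Set.Ioi 0)) (hg : ContDiffOn ℝ 1 g (Set.Ioi 0))
    (hode1 : ∀ ν > (0 : ℝ),
      ν * deriv f ν + (2 * (k : ℝ)) * f ν
        + (ν * deriv g ν + (2 * (k : ℝ) - 2) * g ν) / (ν ^ 2 * deriv (deriv E) ν)
        - deriv f ν * (deriv E ν + ν * deriv (deriv E) ν) / deriv (deriv E) ν = 0)
    (hode2 : ∀ ν > (0 : ℝ),
      deriv g ν
        - (deriv E ν + ν * deriv (deriv E) ν)
            * (ν * deriv g ν + (2 * (k : ℝ) - 2) * g ν)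
            / (ν ^ 2 * deriv (deriv E) ν)
        + deriv f ν / deriv (deriv E) ν = 0)
    (hatE hatf hatg : ℝ → ℝ)
    (hhatE : hatE = fun x => E (Real.sqrt x))
    (hhatf : hatf = fun x => f (Real.sqrt x))
    (hhatg : hatg = fun x => g (Real.sqrt x)) :
    ∀ x > (0 : ℝ),
      (4 * x * deriv (deriv hatE) x + 2 * deriv hatE x
          = deriv (deriv E) (Real.sqrt x) ∧
        deriv (deriv E) (Real.sqrt x) ≠ 0) ∧
      (x * deriv hatf x + (k : ℝ) * hatf x
          + (x * deriv hatg x + ((k : ℝ) - 1) * hatg x)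
              / (x * (4 * deriv (deriv hatE) x * x + 2 * deriv hatE x))
          - deriv hatf x * x * (4 * deriv (deriv hatE) x * x + 4 * deriv hatE x)
              / (4 * deriv (deriv hatE) x * x + 2 * deriv hatE x) = 0) ∧
      (deriv hatg x
          - (4 * deriv (deriv hatE) x * x + 4 * deriv hatE x)
              * (x * deriv hatg x + ((k : ℝ) - 1) * hatg x)
              / (x * (4 * deriv (deriv hatE) x * x + 2 * deriv hatE x))
          + deriv hatf x / (4 * deriv (deriv hatE) x * x + 2 * deriv hatE x)
            = 0) := by
  -- differentiability preliminaries
  have hEd : ContDiffOn ℝ 1 (deriv E) (Set.Ioi 0) :=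
    hE.deriv_of_isOpen isOpen_Ioi (by norm_num)
  have hE1 : ∀ ν > (0:ℝ), HasDerivAt E (deriv E ν) ν := fun ν hν =>
    (((hE.differentiableOn (by norm_num)) ν hν).differentiableAt
      (isOpen_Ioi.mem_nhds hν)).hasDerivAt
  have hE2 : ∀ ν > (0:ℝ), HasDerivAt (deriv E) (deriv (deriv E) ν) ν := fun ν hν =>
    (((hEd.differentiableOn (by norm_num)) ν hν).differentiableAt
      (isOpen_Ioi.mem_nhds hν)).hasDerivAt
  have hf1 : ∀ ν > (0:ℝ), HasDerivAt f (deriv f ν) ν := fun ν hν =>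
    (((hf.differentiableOn (by norm_num)) ν hν).differentiableAt
      (isOpen_Ioi.mem_nhds hν)).hasDerivAt
  have hg1 : ∀ ν > (0:ℝ), HasDerivAt g (deriv g ν) ν := fun ν hν =>
    (((hg.differentiableOn (by norm_num)) ν hν).differentiableAt
      (isOpen_Ioi.mem_nhds hν)).hasDerivAt
  -- first derivative of hatE as a function on Ioi 0
  have key1 : ∀ y > (0:ℝ), deriv hatE y
      = deriv E (Real.sqrt y) * (1 / (2 * Real.sqrt y)) := by
    intro y hy
    rw [hhatE]
    exact (comp_sqrt_hasDerivAt hy (hE1 _ (Real.sqrt_pos.2 hy))).deriv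
  intro x hx
  set ν := Real.sqrt x with hνdef
  have hν : 0 < ν := Real.sqrt_pos.2 hx
  have hx2 : x = ν ^ 2 := (Real.sq_sqrt hx.le).symm
  have e2ne : deriv (deriv E) ν ≠ 0 := hE'' ν hν
  -- first derivatives of hatf, hatg, hatE at x
  have hdf : deriv hatf x = deriv f ν * (1 / (2 * ν)) := by
    rw [hhatf]; exact (comp_sqrt_hasDerivAt hx (hf1 ν hν)).deriv
  have hdg : deriv hatg x = deriv g ν * (1 / (2 * ν)) := by
    rw [hhatg]; exact (comp_sqrt_hasDerivAt hx (hg1 ν hν)).deriv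
  have hdE : deriv hatE x = deriv E ν * (1 / (2 * ν)) := key1 x hx
  have hFf : hatf x = f ν := by rw [hhatf]
  have hGg : hatg x = g ν := by rw [hhatg]
  -- second derivative of hatE
  have hprod : HasDerivAt (fun y => deriv E (Real.sqrt y) * (1 / (2 * Real.sqrt y)))
      (deriv (deriv E) ν * (1 / (2 * ν)) * (1 / (2 * ν))
        + deriv E ν * (-(2 * (1 / (2 * ν))) / (2 * ν) ^ 2)) x := by
    have h1 : HasDerivAt (fun y => deriv E (Real.sqrt y))
        (deriv (deriv E) ν * (1 / (2 * ν))) x :=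
      comp_sqrt_hasDerivAt hx (hE2 ν hν)
    have h2 : HasDerivAt (fun y => (2 * Real.sqrt y))
        (2 * (1 / (2 * ν))) x := (Real.hasDerivAt_sqrt hx.ne').const_mul 2
    have h3 := h2.inv (by positivity)
    have := h1.mul h3
    simp only [one_div] at this ⊢
    convert this using 2 <;> rfl
  have hd2 : deriv (deriv hatE) x
      = deriv (deriv E) ν * (1 / (2 * ν)) * (1 / (2 * ν))
        + deriv E ν * (-(2 * (1 / (2 * ν))) / (2 * ν) ^ 2) := by
    have heq : deriv hatE =ᶠ[nhds x]
        (fun y => deriv E (Real.sqrt y) * (1 / (2 * Real.sqrt y))) := by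
      filter_upwards [isOpen_Ioi.mem_nhds hx] with y hy using key1 y hy
    rw [heq.deriv_eq]
    exact hprod.deriv
  -- combined quantity
  have hsum : 4 * deriv (deriv hatE) x * x + 2 * deriv hatE x = deriv (deriv E) ν := by
    rw [hd2, hdE, hx2]; field_simp; ring
  have hsum2 : 4 * deriv (deriv hatE) x * x + 4 * deriv hatE x
      = deriv (deriv E) ν + deriv E ν / ν := by
    rw [hd2, hdE, hx2]; field_simp; ring
  have hA : 4 * x * deriv (deriv hatE) x + 2 * deriv hatE x = deriv (deriv E) ν := by
    rw [← hsum]; ring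
  refine ⟨⟨hA, e2ne⟩, ?_, ?_⟩
  · rw [hsum, hsum2, hdf, hdg, hFf, hGg, hx2]
    have h1 := hode1 ν hν
    field_simp at h1 ⊢
    linear_combination h1
  · rw [hsum, hsum2, hdg, hdf, hGg, hx2]
    have h2 := hode2 ν hν
    field_simp at h2 ⊢
    linear_combination h2
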